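/- Pointwise limit of normalized Gamma ratios: for fixed $c > 0$ and $u > 0$, $\lim_{k \to \infty} \frac{\Gamma(c + k)}{\Gamma(u/\log k + c + k)} = e^{-u}$, where the limit is along integers $k \ge 2$. -/

import Mathlib

open Filter

private lemma gamma_interp_upper {x s : ℝ} (hx : 0 < x) (hs : 0 < s) (hs1 : s < 1) :
    Real.Gamma (x + s) ≤ Real.Gamma x * x ^ s := by
  have h := Real.Gamma_mul_add_mul_le_rpow_Gamma_mul_rpow_Gamma hx
    (by linarith : (0:ℝ) < x + 1) (by linarith : (0:ℝ) < 1 - s) hs (by ring)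
  have harg : (1 - s) * x + s * (x + 1) = x + s := by ring
  rw [harg, Real.Gamma_add_one hx.ne'] at h
  have hG : 0 < Real.Gamma x := Real.Gamma_pos_of_pos hx
  calc Real.Gamma (x + s) ≤ Real.Gamma x ^ (1 - s) * (x * Real.Gamma x) ^ s := h
    _ = Real.Gamma x * x ^ s := by
        rw [Real.mul_rpow hx.le hG.le, ← mul_assoc, mul_comm (Real.Gamma x ^ (1-s)),
          mul_assoc, ← Real.rpow_add hG]
        ring_nf
        rw [Real.rpow_one]

private lemma gamma_interp_lower {x s : ℝ} (hx : 0 < x) (hs : 0 < s) (hs1 : s < 1) :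
    x * Real.Gamma x ≤ Real.Gamma (x + s) * (x + s) ^ (1 - s) := by
  have h := Real.Gamma_mul_add_mul_le_rpow_Gamma_mul_rpow_Gamma
    (by linarith : (0:ℝ) < x + s) (by linarith : (0:ℝ) < x + s + 1) hs
    (by linarith : (0:ℝ) < 1 - s) (by ring)
  have harg : s * (x + s) + (1 - s) * (x + s + 1) = x + 1 := by ring
  rw [harg, Real.Gamma_add_one hx.ne', Real.Gamma_add_one (by positivity : x + s ≠ 0)] at h
  have hG : 0 < Real.Gamma (x + s) := Real.Gamma_pos_of_pos (by linarith)
  calc x * Real.Gamma x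
      ≤ Real.Gamma (x+s) ^ s * ((x+s) * Real.Gamma (x+s)) ^ (1-s) := h
    _ = Real.Gamma (x + s) * (x + s) ^ (1 - s) := by
        rw [Real.mul_rpow (by linarith : (0:ℝ) ≤ x + s) hG.le, ← mul_assoc,
          mul_comm (Real.Gamma (x+s) ^ s), mul_assoc, mul_comm (Real.Gamma (x+s) ^ s),
          ← Real.rpow_add hG]
        ring_nf
        rw [Real.rpow_one]

private lemma log_ratio_lim (a u : ℝ) (ha : 0 < a) :
    Tendsto (fun k : ℕ => u / Real.log k * Real.log (a + k)) atTop (nhds u) := by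
  have h1 : Tendsto (fun k : ℕ => Real.log (1 + a / k)) atTop (nhds 0) := by
    have ht : Tendsto (fun k : ℕ => 1 + a / (k : ℝ)) atTop (nhds 1) := by
      have hdiv : Tendsto (fun k : ℕ => a / (k : ℝ)) atTop (nhds 0) :=
        Tendsto.div_atTop tendsto_const_nhds tendsto_natCast_atTop_atTop
      have := (tendsto_const_nhds (x := (1:ℝ)) (f := atTop (α := ℕ))).add hdiv
      simpa using this
    have := (Real.continuousAt_log one_ne_zero).tendsto.comp ht
    simpa [Function.comp_def] using this
  have h2 : Tendsto (fun k : ℕ => (Real.log k)⁻¹) atTop (nhds 0) :=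
    (Real.tendsto_log_atTop.comp tendsto_natCast_atTop_atTop).inv_tendsto_atTop
  have h3 : Tendsto (fun k : ℕ => u * (1 + Real.log (1 + a / k) * (Real.log k)⁻¹))
      atTop (nhds u) := by
    have hadd : Tendsto (fun k : ℕ => 1 + Real.log (1 + a / k) * (Real.log k)⁻¹)
        atTop (nhds (1 + 0 * 0)) :=
      (tendsto_const_nhds (x := (1:ℝ)) (f := atTop (α := ℕ))).add (h1.mul h2)
    have := (tendsto_const_nhds (x := u) (f := atTop (α := ℕ))).mul hadd
    simpa using this
  refine h3.congr' ?_
  filter_upwards [eventually_ge_atTop 2] with k hk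
  have hk0 : (0:ℝ) < k := by positivity
  have hlk : Real.log (k:ℝ) ≠ 0 :=
    (Real.log_pos (by exact_mod_cast one_lt_two.trans_le hk)).ne'
  have hne : Real.log (1 + a / k) = Real.log (a + k) - Real.log k := by
    rw [show (1 : ℝ) + a / k = (a + k) / k by field_simp; ring, Real.log_div (by positivity) hk0.ne']
  rw [hne]
  field_simp
  ring

/-- `Γ(c + k) / Γ(u / log k + c + k) → e^{-u}` as `k → ∞` along integers. -/
theorem gamma_ratio_log_limit (c u : ℝ) (hc : 0 < c) (hu : 0 < u) :
    Tendsto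
      (fun k : ℕ => Real.Gamma (c + k) / Real.Gamma (u / Real.log k + c + k))
      atTop (nhds (Real.exp (-u))) := by
  have hlog : Tendsto (fun k : ℕ => Real.log k) atTop atTop :=
    Real.tendsto_log_atTop.comp tendsto_natCast_atTop_atTop
  have hloginv : Tendsto (fun k : ℕ => (Real.log k)⁻¹) atTop (nhds 0) :=
    hlog.inv_tendsto_atTop
  have hs0 : Tendsto (fun k : ℕ => u / Real.log k) atTop (nhds 0) := by
    have := hloginv.const_mul u
    simpa [div_eq_mul_inv] using this
  have hx : Tendsto (fun k : ℕ => c + (k : ℝ)) atTop atTop :=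
    tendsto_atTop_add_const_left _ c tendsto_natCast_atTop_atTop
  -- lower bound tendsto
  have hL : Tendsto (fun k : ℕ => Real.exp (-(u / Real.log k * Real.log (c + k))))
      atTop (nhds (Real.exp (-u))) :=
    (Real.continuous_exp.tendsto _).comp (log_ratio_lim c u hc).neg
  -- term 1 : log (c + k + s) - log (c + k) → 0
  have hterm1 : Tendsto
      (fun k : ℕ => Real.log (c + k + u / Real.log k) - Real.log (c + k)) atTop (nhds 0) := by
    have hdiv : Tendsto (fun k : ℕ => (u / Real.log k) / (c + k)) atTop (nhds 0) :=
      hs0.div_atTop hx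
    have h1 : Tendsto (fun k : ℕ => Real.log (1 + (u / Real.log k) / (c + k)))
        atTop (nhds 0) := by
      have ht : Tendsto (fun k : ℕ => 1 + (u / Real.log k) / (c + k)) atTop (nhds 1) := by
        have := (tendsto_const_nhds (x := (1:ℝ)) (f := atTop (α := ℕ))).add hdiv
        simpa using this
      have := (Real.continuousAt_log one_ne_zero).tendsto.comp ht
      simpa [Function.comp_def] using this
    refine h1.congr' ?_
    filter_upwards [hlog.eventually_gt_atTop 0] with k hk
    have hxk : (0:ℝ) < c + k := by positivity
    have hsk : 0 < u / Real.log k := div_pos hu hk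
    rw [show 1 + (u / Real.log k) / (c + k) = (c + k + u / Real.log k) / (c + k) by
      field_simp, Real.log_div (by positivity) hxk.ne']
  -- term 2 : s * log (c + k + s) → u
  have hterm2 : Tendsto
      (fun k : ℕ => u / Real.log k * Real.log (c + k + u / Real.log k)) atTop (nhds u) := by
    refine tendsto_of_tendsto_of_tendsto_of_le_of_le' (log_ratio_lim c u hc)
      (log_ratio_lim (c + 1) u (by linarith)) ?_ ?_
    · filter_upwards [hlog.eventually_gt_atTop 0] with k hk
      have hsk : 0 < u / Real.log k := div_pos hu hk
      have : Real.log (c + k) ≤ Real.log (c + k + u / Real.log k) :=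
        Real.log_le_log (by positivity) (by linarith)
      exact mul_le_mul_of_nonneg_left this hsk.le
    · filter_upwards [hlog.eventually_gt_atTop u] with k hk
      have hk0 : 0 < Real.log k := hu.trans hk
      have hsk : u / Real.log k < 1 := (div_lt_one hk0).mpr hk
      have hsk0 : 0 < u / Real.log k := div_pos hu hk0
      have : Real.log (c + k + u / Real.log k) ≤ Real.log (c + 1 + k) :=
        Real.log_le_log (by positivity) (by linarith)
      exact mul_le_mul_of_nonneg_left this hsk0.le
  -- upper bound tendsto
  have hU : Tendsto (fun k : ℕ =>
      Real.exp ((Real.log (c + k + u / Real.log k) - Real.log (c + k))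
        - u / Real.log k * Real.log (c + k + u / Real.log k)))
      atTop (nhds (Real.exp (-u))) := by
    have := (Real.continuous_exp.tendsto _).comp (hterm1.sub hterm2)
    simpa [Function.comp_def] using this
  -- squeeze
  refine tendsto_of_tendsto_of_tendsto_of_le_of_le' hL hU ?_ ?_
  · filter_upwards [hlog.eventually_gt_atTop u] with k hk
    have hk0 : 0 < Real.log k := hu.trans hk
    set sk := u / Real.log k with hskdef
    have hsk1 : sk < 1 := (div_lt_one hk0).mpr hk
    have hsk0 : 0 < sk := div_pos hu hk0
    have hxk : (0:ℝ) < c + k := by positivity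
    have hGx : 0 < Real.Gamma (c + k) := Real.Gamma_pos_of_pos hxk
    have hGxs : 0 < Real.Gamma ((c + k) + sk) := Real.Gamma_pos_of_pos (by linarith)
    have hpow : (0:ℝ) < (c + k) ^ sk := Real.rpow_pos_of_pos hxk sk
    have harg : sk + c + (k:ℝ) = (c + k) + sk := by ring
    rw [harg]
    calc Real.exp (-(sk * Real.log (c + k))) = (c + k) ^ (-sk) := by
          rw [Real.rpow_def_of_pos hxk]; ring_nf
      _ ≤ Real.Gamma (c + k) / Real.Gamma ((c + k) + sk) := by
          rw [Real.rpow_neg hxk.le, inv_eq_one_div, div_le_div_iff₀ hpow hGxs, one_mul]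
          exact gamma_interp_upper hxk hsk0 hsk1
  · filter_upwards [hlog.eventually_gt_atTop u] with k hk
    have hk0 : 0 < Real.log k := hu.trans hk
    set sk := u / Real.log k with hskdef
    have hsk1 : sk < 1 := (div_lt_one hk0).mpr hk
    have hsk0 : 0 < sk := div_pos hu hk0
    have hxk : (0:ℝ) < c + k := by positivity
    have hGx : 0 < Real.Gamma (c + k) := Real.Gamma_pos_of_pos hxk
    have hGxs : 0 < Real.Gamma ((c + k) + sk) := Real.Gamma_pos_of_pos (by linarith)
    have harg : sk + c + (k:ℝ) = (c + k) + sk := by ring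
    rw [harg]
    calc Real.Gamma (c + k) / Real.Gamma ((c + k) + sk)
        ≤ ((c + k) + sk) ^ (1 - sk) / (c + k) := by
          rw [div_le_div_iff₀ hGxs hxk]
          calc Real.Gamma (c + k) * (c + k) = (c + k) * Real.Gamma (c + k) := mul_comm _ _
            _ ≤ Real.Gamma ((c + k) + sk) * ((c + k) + sk) ^ (1 - sk) :=
                gamma_interp_lower hxk hsk0 hsk1
            _ = ((c + k) + sk) ^ (1 - sk) * Real.Gamma ((c + k) + sk) := mul_comm _ _
      _ = Real.exp ((Real.log (c + k + sk) - Real.log (c + k)) - sk * Real.log (c + k + sk)) := by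
          rw [Real.rpow_def_of_pos (by linarith : (0:ℝ) < (c + k) + sk),
            show (Real.log (c + k + sk) - Real.log (c + k)) - sk * Real.log (c + k + sk)
              = Real.log (c + k + sk) * (1 - sk) - Real.log (c + k) by ring,
            Real.exp_sub, Real.exp_log hxk]
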